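/- Let G be a finite subgroup of SO(3) and let v ∈ ℝ³ be nonzero. Then the stabilizer of v in G, i.e., the subgroup {A ∈ G : A·v = v}, is a cyclic group (it consists of the rotations of G about the axis through v). -/

import Mathlib

open Matrix

/-- A 3×3 real matrix is a rotation if it is orthogonal with determinant 1. -/
def IsRotation (A : Matrix (Fin 3) (Fin 3) ℝ) : Prop := Aᵀ * A = 1 ∧ A.det = 1

/-- The action of a 3×3 matrix on ℝ³ by matrix–vector multiplication. -/
noncomputable def act (A : Matrix (Fin 3) (Fin 3) ℝ) (v : EuclideanSpace ℝ (Fin 3)) :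
    EuclideanSpace ℝ (Fin 3) := WithLp.toLp 2 (A.mulVec v)

noncomputable section
open scoped RealInnerProductSpace

local notation "E3" => EuclideanSpace ℝ (Fin 3)

lemma inner_eq_dot (a b : E3) : ⟪a, b⟫ = a ⬝ᵥ b := by
  simp [PiLp.inner_apply, dotProduct, RCLike.inner_apply, mul_comm]

-- orthogonal matrices preserve the real inner product
lemma orth_inner {M : Matrix (Fin 3) (Fin 3) ℝ} (hM : Mᵀ * M = 1) (p q : E3) :
    ⟪act M p, act M q⟫ = ⟪p, q⟫ := by
  rw [inner_eq_dot, inner_eq_dot]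
  show M.mulVec p ⬝ᵥ M.mulVec q = p ⬝ᵥ q
  calc M.mulVec p ⬝ᵥ M.mulVec q = (p ᵥ* Mᵀ) ⬝ᵥ (M *ᵥ q) := by rw [vecMul_transpose]
    _ = (p ᵥ* Mᵀ ᵥ* M) ⬝ᵥ q := by rw [dotProduct_mulVec]
    _ = (p ᵥ* (Mᵀ * M)) ⬝ᵥ q := by rw [vecMul_vecMul]
    _ = p ⬝ᵥ q := by rw [hM, vecMul_one]

-- linearity of act
lemma act_combo (M : Matrix (Fin 3) (Fin 3) ℝ) (r r' : ℝ) (y y' : E3) :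
    act M (r • y + r' • y') = r • act M y + r' • act M y' := by
  show WithLp.toLp 2 (M.mulVec (r • (y : Fin 3 → ℝ) + r' • (y' : Fin 3 → ℝ))) = _
  rw [mulVec_add, mulVec_smul, mulVec_smul]
  rfl

lemma act_smul (M : Matrix (Fin 3) (Fin 3) ℝ) (r : ℝ) (y : E3) :
    act M (r • y) = r • act M y := by
  show WithLp.toLp 2 (M.mulVec (r • (y : Fin 3 → ℝ))) = _
  rw [mulVec_smul]; rfl

lemma act_add (M : Matrix (Fin 3) (Fin 3) ℝ) (y y' : E3) :
    act M (y + y') = act M y + act M y' := by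
  show WithLp.toLp 2 (M.mulVec ((y : Fin 3 → ℝ) + (y' : Fin 3 → ℝ))) = _
  rw [mulVec_add]; rfl

lemma act_mul (M N : Matrix (Fin 3) (Fin 3) ℝ) (y : E3) :
    act (M * N) y = act M (act N y) := by
  show WithLp.toLp 2 ((M * N).mulVec y) = WithLp.toLp 2 (M.mulVec (N.mulVec y))
  rw [mulVec_mulVec]

lemma act_one (y : E3) : act 1 y = y := by simp [act]

lemma expand_basis (b : OrthonormalBasis (Fin 3) ℝ E3) (y : E3) :
    y = ⟪b 0, y⟫ • b 0 + ⟪b 1, y⟫ • b 1 + ⟪b 2, y⟫ • b 2 := by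
  have := b.sum_repr y
  rw [Fin.sum_univ_three] at this
  simp only [b.repr_apply_apply] at this
  exact this.symm

lemma inner_combo {w x : E3} (hw : ⟪w, w⟫ = 1) (hx : ⟪x, x⟫ = 1) (hwx : ⟪w, x⟫ = 0)
    (a a' c c' : ℝ) : ⟪a • w + c • x, a' • w + c' • x⟫ = a * a' + c * c' := by
  have hxw : ⟪x, w⟫ = 0 := by rw [real_inner_comm]; exact hwx
  simp only [inner_add_left, inner_add_right, real_inner_smul_left, real_inner_smul_right,
    hw, hx, hwx, hxw]
  ring

lemma rot_plane (b : OrthonormalBasis (Fin 3) ℝ E3) {A : Matrix (Fin 3) (Fin 3) ℝ}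
    (hO : Aᵀ * A = 1) (hdet : A.det = 1) (hfix : act A (b 0) = b 0) :
    act A (b 1) = ⟪b 1, act A (b 1)⟫ • b 1 + ⟪b 2, act A (b 1)⟫ • b 2 ∧
    act A (b 2) = (-⟪b 2, act A (b 1)⟫) • b 1 + ⟪b 1, act A (b 1)⟫ • b 2 ∧
    ⟪b 1, act A (b 1)⟫ ^ 2 + ⟪b 2, act A (b 1)⟫ ^ 2 = 1 := by
  have hb := b.orthonormal
  have hnorm : ∀ i, ⟪b i, b i⟫ = 1 := fun i => by
    have := hb.1 i
    rw [real_inner_self_eq_norm_mul_norm, this, one_mul]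
  have hoff : ∀ i j, i ≠ j → ⟪b i, b j⟫ = 0 := fun i j h => hb.2 h
  set c := ⟪b 1, act A (b 1)⟫ with hc
  set s := ⟪b 2, act A (b 1)⟫ with hs
  set p := ⟪b 1, act A (b 2)⟫ with hp
  set q := ⟪b 2, act A (b 2)⟫ with hq
  -- first components vanish
  have h01 : ⟪b 0, act A (b 1)⟫ = 0 := by
    calc ⟪b 0, act A (b 1)⟫ = ⟪act A (b 0), act A (b 1)⟫ := by rw [hfix]
      _ = ⟪b 0, b 1⟫ := orth_inner hO _ _
      _ = 0 := hoff 0 1 (by decide)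
  have h02 : ⟪b 0, act A (b 2)⟫ = 0 := by
    calc ⟪b 0, act A (b 2)⟫ = ⟪act A (b 0), act A (b 2)⟫ := by rw [hfix]
      _ = ⟪b 0, b 2⟫ := orth_inner hO _ _
      _ = 0 := hoff 0 2 (by decide)
  have haw : act A (b 1) = c • b 1 + s • b 2 := by
    have := expand_basis b (act A (b 1))
    rw [h01, zero_smul, zero_add] at this
    exact this
  have hax : act A (b 2) = p • b 1 + q • b 2 := by
    have := expand_basis b (act A (b 2))
    rw [h02, zero_smul, zero_add] at this
    exact this
  have hic := inner_combo (hnorm 1) (hnorm 2) (hoff 1 2 (by decide))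
  have rel1 : c * c + s * s = 1 := by
    have h := orth_inner hO (b 1) (b 1)
    rw [haw, hic, hnorm 1] at h
    exact h
  have rel2 : c * p + s * q = 0 := by
    have h := orth_inner hO (b 1) (b 2)
    rw [haw, hax, hic, hoff 1 2 (by decide)] at h
    exact h
  -- determinant
  have rel3 : c * q - p * s = 1 := by
    set T : E3 →ₗ[ℝ] E3 :=
      { toFun := act A, map_add' := act_add A, map_smul' := fun r y => act_smul A r y } with hT
    set e := (EuclideanSpace.basisFun (Fin 3) ℝ).toBasis with he
    have hTA : LinearMap.toMatrix e e T = A := by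
      ext i j
      rw [LinearMap.toMatrix_apply, he, OrthonormalBasis.coe_toBasis_repr_apply,
        EuclideanSpace.basisFun_repr, OrthonormalBasis.coe_toBasis,
        EuclideanSpace.basisFun_apply]
      show (A.mulVec (EuclideanSpace.single j 1)) i = A i j
      simp [Matrix.mulVec, dotProduct, EuclideanSpace.single_apply]
    have hdetT : LinearMap.det T = 1 := by
      rw [← LinearMap.det_toMatrix e T, hTA]; exact hdet
    have hM : (LinearMap.toMatrix b.toBasis b.toBasis T).det = 1 := by
      rw [LinearMap.det_toMatrix]; exact hdetT
    have hentry : ∀ i j, LinearMap.toMatrix b.toBasis b.toBasis T i j = ⟪b i, act A (b j)⟫ := by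
      intro i j
      rw [LinearMap.toMatrix_apply, OrthonormalBasis.coe_toBasis_repr_apply,
        b.repr_apply_apply, OrthonormalBasis.coe_toBasis]
      rfl
    rw [det_fin_three] at hM
    simp only [hentry, hfix] at hM
    rw [← hc, ← hs, ← hp, ← hq] at hM
    rw [hnorm 0, hoff 1 0 (by decide), hoff 2 0 (by decide), h01, h02] at hM
    linear_combination hM
  have hqc : q = c := by linear_combination c * rel3 + s * rel2 - q * rel1
  have hps : p = -s := by linear_combination -s * rel3 + c * rel2 - p * rel1
  refine ⟨haw, ?_, by nlinarith [rel1]⟩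
  rw [hax, hqc, hps]

theorem stabilizer_is_cyclic
    (G : Set (Matrix (Fin 3) (Fin 3) ℝ)) (hGfin : G.Finite)
    (hGrot : ∀ A ∈ G, IsRotation A)
    (hGone : (1 : Matrix (Fin 3) (Fin 3) ℝ) ∈ G)
    (hGmul : ∀ A ∈ G, ∀ B ∈ G, A * B ∈ G)
    (hGinv : ∀ A ∈ G, A⁻¹ ∈ G)
    (v : EuclideanSpace ℝ (Fin 3)) (hv : v ≠ 0) :
    ∃ B ∈ {A | A ∈ G ∧ act A v = v},
      ∀ A ∈ {A | A ∈ G ∧ act A v = v}, ∃ n : ℕ, A = B ^ n := by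
  classical
  set S := {A : Matrix (Fin 3) (Fin 3) ℝ | A ∈ G ∧ act A v = v} with hSdef
  have hrot : ∀ A ∈ S, Aᵀ * A = 1 ∧ A.det = 1 := by
    intro A hA
    obtain ⟨h1, h2⟩ := hGrot A hA.1
    exact ⟨h1, h2⟩
  have hS1 : (1 : Matrix (Fin 3) (Fin 3) ℝ) ∈ S := ⟨hGone, act_one v⟩
  have hSmul : ∀ A ∈ S, ∀ B ∈ S, A * B ∈ S := fun A hA B hB =>
    ⟨hGmul A hA.1 B hB.1, by rw [act_mul, hB.2, hA.2]⟩
  have hSinvmul : ∀ A ∈ S, A⁻¹ * A = 1 := fun A hA =>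
    Matrix.nonsing_inv_mul A (by rw [(hrot A hA).2]; exact isUnit_one)
  have hSinv : ∀ A ∈ S, A⁻¹ ∈ S := by
    intro A hA
    refine ⟨hGinv A hA.1, ?_⟩
    calc act A⁻¹ v = act A⁻¹ (act A v) := by rw [hA.2]
      _ = act (A⁻¹ * A) v := (act_mul _ _ _).symm
      _ = v := by rw [hSinvmul A hA, act_one]
  letI : Group ↥S :=
    { mul := fun a b => ⟨a.1 * b.1, hSmul _ a.2 _ b.2⟩
      one := ⟨1, hS1⟩
      inv := fun a => ⟨a.1⁻¹, hSinv _ a.2⟩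
      mul_assoc := fun a b c => Subtype.ext (mul_assoc _ _ _)
      one_mul := fun a => Subtype.ext (one_mul _)
      mul_one := fun a => Subtype.ext (mul_one _)
      inv_mul_cancel := fun a => Subtype.ext (hSinvmul a.1 a.2) }
  have coe_mul : ∀ a b : ↥S, ((a * b : ↥S) : Matrix (Fin 3) (Fin 3) ℝ) = a.1 * b.1 :=
    fun _ _ => rfl
  have coe_one : ((1 : ↥S) : Matrix (Fin 3) (Fin 3) ℝ) = 1 := rfl
  have coe_pow : ∀ (a : ↥S) (n : ℕ),
      ((a ^ n : ↥S) : Matrix (Fin 3) (Fin 3) ℝ) = (a : Matrix (Fin 3) (Fin 3) ℝ) ^ n := by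
    intro a n
    induction n with
    | zero => rw [pow_zero, pow_zero, coe_one]
    | succ n ih => rw [pow_succ, pow_succ, coe_mul, ih]
  haveI : Finite ↥S := (hGfin.subset fun A hA => hA.1).to_subtype
  -- construct an orthonormal basis whose first vector is the direction of v
  have hvn : ‖v‖ ≠ 0 := norm_ne_zero_iff.mpr hv
  obtain ⟨b, hb0⟩ : ∃ b : OrthonormalBasis (Fin 3) ℝ (EuclideanSpace ℝ (Fin 3)),
      b 0 = ‖v‖⁻¹ • v := by
    have hcard : Module.finrank ℝ (EuclideanSpace ℝ (Fin 3)) = Fintype.card (Fin 3) := by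
      simp [finrank_euclideanSpace]
    have horth : Orthonormal ℝ
        (({0} : Set (Fin 3)).restrict (fun _ => (‖v‖⁻¹ • v : EuclideanSpace ℝ (Fin 3)))) := by
      constructor
      · intro i
        show ‖(‖v‖⁻¹ • v : EuclideanSpace ℝ (Fin 3))‖ = 1
        rw [norm_smul]
        simp [hvn]
      · intro i j hij
        exact absurd (Subtype.ext (i.2.trans j.2.symm)) hij
    obtain ⟨b, hb⟩ := horth.exists_orthonormalBasis_extension_of_card_eq hcard
    exact ⟨b, hb 0 rfl⟩
  have hb := b.orthonormal
  have hnorm : ∀ i, ⟪b i, b i⟫ = 1 := fun i => by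
    have := hb.1 i
    rw [real_inner_self_eq_norm_mul_norm, this, one_mul]
  have hoff : ∀ i j, i ≠ j → ⟪b i, b j⟫ = 0 := fun i j h => hb.2 h
  have hip1 : ∀ r r' : ℝ, ⟪b 1, r • b 1 + r' • b 2⟫ = r := by
    intro r r'
    rw [inner_add_right, real_inner_smul_right, real_inner_smul_right, hnorm 1,
      hoff 1 2 (by decide)]
    ring
  have hip2 : ∀ r r' : ℝ, ⟪b 2, r • b 1 + r' • b 2⟫ = r' := by
    intro r r'
    rw [inner_add_right, real_inner_smul_right, real_inner_smul_right, hnorm 2,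
      hoff 2 1 (by decide)]
    ring
  have hfixu : ∀ A ∈ S, act A (b 0) = b 0 := by
    intro A hA
    rw [hb0, act_smul, hA.2]
  -- structure of each stabilizer element
  set C : ↥S → ℝ := fun a => ⟪b 1, act a.1 (b 1)⟫ with hC
  set Sn : ↥S → ℝ := fun a => ⟪b 2, act a.1 (b 1)⟫ with hSn
  have hrp : ∀ a : ↥S,
      act a.1 (b 1) = C a • b 1 + Sn a • b 2 ∧
      act a.1 (b 2) = (-Sn a) • b 1 + C a • b 2 := by
    intro a
    obtain ⟨h1, h2, _⟩ := rot_plane b (hrot a.1 a.2).1 (hrot a.1 a.2).2 (hfixu a.1 a.2)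
    exact ⟨h1, h2⟩
  -- products
  have hCmul : ∀ a a' : ↥S, C (a * a') = C a * C a' - Sn a * Sn a' ∧
      Sn (a * a') = Sn a * C a' + C a * Sn a' := by
    intro a a'
    have hact : act ((a * a' : ↥S) : Matrix (Fin 3) (Fin 3) ℝ) (b 1)
        = (C a * C a' - Sn a * Sn a') • b 1 + (Sn a * C a' + C a * Sn a') • b 2 := by
      rw [coe_mul, act_mul, (hrp a').1, act_combo, (hrp a).1, (hrp a).2]
      module
    constructor
    · show ⟪b 1, act ((a * a' : ↥S) : Matrix (Fin 3) (Fin 3) ℝ) (b 1)⟫ = _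
      rw [hact, hip1]
    · show ⟪b 2, act ((a * a' : ↥S) : Matrix (Fin 3) (Fin 3) ℝ) (b 1)⟫ = _
      rw [hact, hip2]
  -- the monoid hom to ℂ
  let φ : ↥S →* ℂ :=
    { toFun := fun a => (C a : ℂ) + (Sn a : ℂ) * Complex.I
      map_one' := by
        show (C 1 : ℂ) + (Sn 1 : ℂ) * Complex.I = 1
        have h1 : C 1 = 1 := by
          show ⟪b 1, act (1 : Matrix (Fin 3) (Fin 3) ℝ) (b 1)⟫ = 1
          rw [act_one]; exact hnorm 1
        have h2 : Sn 1 = 0 := by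
          show ⟪b 2, act (1 : Matrix (Fin 3) (Fin 3) ℝ) (b 1)⟫ = 0
          rw [act_one]; exact hoff 2 1 (by decide)
        rw [h1, h2]; simp
      map_mul' := by
        intro a a'
        show (C (a * a') : ℂ) + (Sn (a * a') : ℂ) * Complex.I
          = ((C a : ℂ) + (Sn a : ℂ) * Complex.I) * ((C a' : ℂ) + (Sn a' : ℂ) * Complex.I)
        rw [(hCmul a a').1, (hCmul a a').2]
        apply Complex.ext <;> simp <;> ring }
  have hφinj : Function.Injective φ := by
    intro a a' h
    have h' : (C a : ℂ) + (Sn a : ℂ) * Complex.I = (C a' : ℂ) + (Sn a' : ℂ) * Complex.I := h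
    rw [Complex.ext_iff] at h'
    simp only [Complex.add_re, Complex.ofReal_re, Complex.mul_re, Complex.I_re, Complex.I_im,
      Complex.ofReal_im, Complex.add_im, Complex.mul_im] at h'
    have hre : C a = C a' := by
      have := h'.1; nlinarith [this]
    have him : Sn a = Sn a' := by
      have := h'.2; nlinarith [this]
    have hbi0 : act a.1 (b 0) = act a'.1 (b 0) := by
      rw [hfixu a.1 a.2, hfixu a'.1 a'.2]
    have hbi1 : act a.1 (b 1) = act a'.1 (b 1) := by
      rw [(hrp a).1, (hrp a').1, hre, him]
    have hbi2 : act a.1 (b 2) = act a'.1 (b 2) := by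
      rw [(hrp a).2, (hrp a').2, hre, him]
    have hall : ∀ y : EuclideanSpace ℝ (Fin 3), act a.1 y = act a'.1 y := by
      intro y
      rw [expand_basis b y, act_add, act_add, act_add, act_add,
        act_smul, act_smul, act_smul, act_smul, act_smul, act_smul,
        hbi0, hbi1, hbi2]
    apply Subtype.ext
    ext i j
    have hy := congrFun (congrArg WithLp.ofLp (hall (EuclideanSpace.single j 1))) i
    simpa [act, Matrix.mulVec, dotProduct, EuclideanSpace.single_apply] using hy
  haveI : IsCyclic ↥S := isCyclic_of_subgroup_isDomain φ hφinj
  obtain ⟨g, hg⟩ := IsCyclic.exists_monoid_generator (α := ↥S)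
  refine ⟨g.1, g.2, ?_⟩
  intro A hA
  obtain ⟨n, hn⟩ := hg ⟨A, hA⟩
  refine ⟨n, ?_⟩
  have h' := congrArg Subtype.val hn
  dsimp only at h'
  rw [← h', coe_pow]
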